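/- arXiv:2003.03447 — 3 statements merged into one kernel-verified Lean document; each statement's English description precedes it below -/
import Mathlib

section
/- Let G be a simple graph on n vertices with m edges, and let S_k be any set of k vertices of G of largest degrees (i.e., ordering the vertices v₁,…,vₙ so that deg(v₁) ≥ ⋯ ≥ deg(vₙ), take S_k = {v₁,…,v_k}). Then s_k(G) ≤ m + e(S_k) − e(V(G)∖S_k) + ‖A(G)‖_(k), where e(S) denotes the number of edges of G with both endpoints in S and ‖A(G)‖_(k) is the sum of the k largest singular values (equivalently, the k largest absolute values of eigenvalues) of the adjacency matrix A(G). -/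
open Finset

namespace Brouwer

variable {V : Type*}

/-- The sum of the `k` largest values of `f` on a finite type, expressed as the
supremum over all `k`-element subsets of the sum of `f` over the subset. -/
noncomputable def sumKLargest [Fintype V] (f : V → ℝ) (k : ℕ) : ℝ :=
  sSup { x : ℝ | ∃ T : Finset V, T.card = k ∧ ∑ i ∈ T, f i = x }

/-- The Laplacian matrix of a finite simple graph is Hermitian (real symmetric). -/
theorem lapMatrix_isHermitian [Fintype V] [DecidableEq V] (G : SimpleGraph V)
    [DecidableRel G.Adj] : (G.lapMatrix ℝ).IsHermitian := by
  rw [Matrix.IsHermitian, Matrix.conjTranspose_eq_transpose_of_trivial]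
  exact G.isSymm_lapMatrix ℝ

/-- The adjacency matrix of a finite simple graph is Hermitian (real symmetric). -/
theorem adjMatrix_isHermitian [Fintype V] [DecidableEq V] (G : SimpleGraph V)
    [DecidableRel G.Adj] : (G.adjMatrix ℝ).IsHermitian := by
  rw [Matrix.IsHermitian, Matrix.conjTranspose_eq_transpose_of_trivial]
  exact G.isSymm_adjMatrix

/-- The (multiset of) eigenvalues of the Laplacian matrix of `G`, indexed by vertices. -/
noncomputable def lapEig [Fintype V] [DecidableEq V] (G : SimpleGraph V) : V → ℝ := by
  classical exact (lapMatrix_isHermitian G).eigenvalues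

/-- The (multiset of) eigenvalues of the adjacency matrix of `G`, indexed by vertices. -/
noncomputable def adjEig [Fintype V] [DecidableEq V] (G : SimpleGraph V) : V → ℝ := by
  classical exact (adjMatrix_isHermitian G).eigenvalues

/-- `sLap G k` is `s_k(G)`, the sum of the `k` largest Laplacian eigenvalues of `G`. -/
noncomputable def sLap [Fintype V] [DecidableEq V] (G : SimpleGraph V) (k : ℕ) : ℝ :=
  sumKLargest (lapEig G) k

/-- The number of edges of `G`. -/
noncomputable def numEdges [Fintype V] (G : SimpleGraph V) : ℕ := by
  classical exact G.edgeFinset.card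

/-- `BC G k`: Brouwer's conjectured inequality `s_k(G) ≤ m + (k+1 choose 2)`. -/
def BC [Fintype V] [DecidableEq V] (G : SimpleGraph V) (k : ℕ) : Prop :=
  sLap G k ≤ numEdges G + (k + 1).choose 2

/-- Number of edges of `G` with both endpoints in `S`. -/
noncomputable def edgesWithin [Fintype V] [DecidableEq V] (G : SimpleGraph V)
    (S : Finset V) : ℕ := by
  classical exact (G.edgeFinset.filter (fun e => ∀ v ∈ e, v ∈ S)).card

/-- The adjacency spectral radius of `G`, i.e. the largest adjacency eigenvalue. -/
noncomputable def specRad [Fintype V] [DecidableEq V] (G : SimpleGraph V) : ℝ :=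
  sumKLargest (adjEig G) 1

/-- The maximum subgraph spectral density `t(G)`:
the supremum of `ρ(G[S])/|S|` over nonempty vertex subsets `S`. -/
noncomputable def maxDensity [Fintype V] [DecidableEq V] (G : SimpleGraph V) : ℝ :=
  sSup { x : ℝ | ∃ S : Finset V, S.Nonempty ∧
    x = specRad (G.induce (↑S : Set V)) / (S.card : ℝ) }

/-- Edge-edit distance between two graphs on the same vertex set. -/
noncomputable def editDistance [Fintype V] (G H : SimpleGraph V) : ℕ := by
  classical exact (symmDiff G.edgeFinset H.edgeFinset).card

/-- A split graph: the vertex set partitions into a clique and an independent set. -/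
def IsSplit (G : SimpleGraph V) : Prop :=
  ∃ C : Set V, G.IsClique C ∧ Gᶜ.IsClique Cᶜ

/-- The splittance of `G`: the least number of edge edits needed to reach a split graph. -/
noncomputable def splittance [Fintype V] (G : SimpleGraph V) : ℕ :=
  sInf { d : ℕ | ∃ H : SimpleGraph V, IsSplit H ∧ editDistance G H = d }

/-- The join `G + K₁` of `G` with one new vertex adjacent to every vertex of `G`. -/
def joinOne (G : SimpleGraph V) : SimpleGraph (Option V) where
  Adj x y := x ≠ y ∧ ∀ a, x = some a → ∀ b, y = some b → G.Adj a b
  symm := by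
    constructor
    rintro x y ⟨hxy, h⟩
    exact ⟨hxy.symm, fun a ha b hb => (h b hb a ha).symm⟩
  loopless := by constructor; rintro x ⟨hxx, -⟩; exact hxx rfl


/-! ### Auxiliary lemmas -/

section AuxLemmas

set_option linter.unusedSectionVars false

variable [Fintype V] [DecidableEq V]

lemma sumK_set_eq (f : V → ℝ) (k : ℕ) :
    { x : ℝ | ∃ T : Finset V, T.card = k ∧ ∑ i ∈ T, f i = x } =
      ↑((Finset.univ.powersetCard k).image fun T => ∑ i ∈ T, f i) := by
  ext x
  simp only [Set.mem_setOf_eq, Finset.coe_image, Set.mem_image, Finset.mem_coe,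
    Finset.mem_powersetCard_univ]

lemma le_sumKLargest (f : V → ℝ) {k : ℕ} {T : Finset V} (hT : T.card = k) :
    ∑ i ∈ T, f i ≤ sumKLargest f k := by
  apply le_csSup
  · rw [sumK_set_eq]
    exact Finset.bddAbove _
  · exact ⟨T, hT, rfl⟩

lemma sumKLargest_le (f : V → ℝ) {k : ℕ} (hk : k ≤ Fintype.card V) {c : ℝ}
    (h : ∀ T : Finset V, T.card = k → ∑ i ∈ T, f i ≤ c) : sumKLargest f k ≤ c := by
  apply csSup_le
  · obtain ⟨T, -, hT⟩ := Finset.exists_subset_card_eq (s := (Finset.univ : Finset V))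
      (by simpa using hk)
    exact ⟨∑ i ∈ T, f i, T, hT, rfl⟩
  · rintro x ⟨T, hT, rfl⟩; exact h T hT

lemma weighted_sum_le {f w : V → ℝ} {S : Finset V} (hS : S.Nonempty)
    (hw0 : ∀ v, 0 ≤ w v) (hw1 : ∀ v, w v ≤ 1) (hsum : ∑ v, w v = (S.card : ℝ))
    (htop : ∀ v ∈ S, ∀ u ∉ S, f u ≤ f v) :
    ∑ v, w v * f v ≤ ∑ v ∈ S, f v := by
  obtain ⟨v₀, hv₀, hc⟩ := Finset.exists_mem_eq_inf' hS f
  set c := S.inf' hS f with hcdef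
  have hcle : ∀ v ∈ S, c ≤ f v := fun v hv => Finset.inf'_le f hv
  have hlec : ∀ u ∉ S, f u ≤ c := fun u hu => hc ▸ htop v₀ hv₀ u hu
  have hsplit : ∑ v ∈ S, w v * f v + ∑ v ∈ Sᶜ, w v * f v = ∑ v, w v * f v :=
    Finset.sum_add_sum_compl S _
  have hwsplit : ∑ v ∈ S, w v + ∑ v ∈ Sᶜ, w v = (S.card : ℝ) := by
    rw [Finset.sum_add_sum_compl]; exact hsum
  have h1 : ∑ v ∈ Sᶜ, w v * f v ≤ (∑ v ∈ Sᶜ, w v) * c := by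
    rw [Finset.sum_mul]
    exact Finset.sum_le_sum fun u hu =>
      mul_le_mul_of_nonneg_left (hlec u (by simpa using hu)) (hw0 u)
  have h2 : (∑ v ∈ S, (1 - w v)) * c ≤ ∑ v ∈ S, (1 - w v) * f v := by
    rw [Finset.sum_mul]
    exact Finset.sum_le_sum fun v hv =>
      mul_le_mul_of_nonneg_left (hcle v hv) (by linarith [hw1 v])
  have h3 : ∑ v ∈ S, (1 - w v) = (S.card : ℝ) - ∑ v ∈ S, w v := by
    rw [Finset.sum_sub_distrib, Finset.sum_const, nsmul_eq_mul, mul_one]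
  have h4 : ∑ v ∈ S, (1 - w v) * f v = ∑ v ∈ S, f v - ∑ v ∈ S, w v * f v := by
    rw [← Finset.sum_sub_distrib]
    exact Finset.sum_congr rfl fun v _ => by ring
  have h6 : (∑ v ∈ Sᶜ, w v) * c = (∑ v ∈ S, (1 - w v)) * c := by
    rw [h3]; congr 1; linarith
  linarith

lemma exists_top_subset (f : V → ℝ) {k : ℕ} (hk : k ≤ Fintype.card V) :
    ∃ S : Finset V, S.card = k ∧ ∀ v ∈ S, ∀ u ∉ S, f u ≤ f v := by
  have hne : ((Finset.univ : Finset V).powersetCard k).Nonempty := by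
    rw [Finset.powersetCard_nonempty]; simpa using hk
  obtain ⟨S, hSmem, hSmax⟩ := Finset.exists_max_image _ (fun T => ∑ i ∈ T, f i) hne
  have hScard : S.card = k := Finset.mem_powersetCard_univ.mp hSmem
  refine ⟨S, hScard, fun v hv u hu => ?_⟩
  have hpos : 0 < S.card := Finset.card_pos.mpr ⟨v, hv⟩
  have hnm : u ∉ S.erase v := fun h => hu (Finset.mem_of_mem_erase h)
  have hins : (insert u (S.erase v)).card = k := by
    rw [Finset.card_insert_of_notMem hnm, Finset.card_erase_of_mem hv]
    omega
  have := hSmax (insert u (S.erase v)) (Finset.mem_powersetCard_univ.mpr hins)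
  rw [Finset.sum_insert hnm, Finset.sum_erase_eq_sub hv] at this
  linarith


lemma eigCongr {A B : Matrix V V ℝ} (h : A = B) (hA : A.IsHermitian) (hB : B.IsHermitian) :
    hA.eigenvalues = hB.eigenvalues := by subst h; rfl

lemma colOrth {A : Matrix V V ℝ} (hA : A.IsHermitian) (i j : V) :
    ∑ a, (hA.eigenvectorUnitary : Matrix V V ℝ) a i * (hA.eigenvectorUnitary : Matrix V V ℝ) a j
      = if i = j then (1 : ℝ) else 0 := by
  have h := Matrix.UnitaryGroup.star_mul_self hA.eigenvectorUnitary
  have h2 := congrFun (congrFun h i) j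
  simpa [Matrix.mul_apply, Matrix.star_apply, Matrix.one_apply] using h2

lemma rowOrth {A : Matrix V V ℝ} (hA : A.IsHermitian) (a b : V) :
    ∑ j, (hA.eigenvectorUnitary : Matrix V V ℝ) a j * (hA.eigenvectorUnitary : Matrix V V ℝ) b j
      = if a = b then (1 : ℝ) else 0 := by
  have h : (hA.eigenvectorUnitary : Matrix V V ℝ) * star (hA.eigenvectorUnitary : Matrix V V ℝ)
      = 1 := Matrix.mem_unitaryGroup_iff.mp hA.eigenvectorUnitary.2
  have h2 := congrFun (congrFun h a) b
  simpa [Matrix.mul_apply, Matrix.star_apply, Matrix.one_apply] using h2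

lemma entry_eq {A : Matrix V V ℝ} (hA : A.IsHermitian) (a b : V) :
    A a b = ∑ i, (hA.eigenvectorUnitary : Matrix V V ℝ) a i * hA.eigenvalues i
      * (hA.eigenvectorUnitary : Matrix V V ℝ) b i := by
  conv_lhs => rw [hA.spectral_theorem, Unitary.conjStarAlgAut_apply]
  rw [Matrix.mul_apply]
  apply Finset.sum_congr rfl
  intro i _
  rw [Matrix.mul_diagonal]
  simp [Matrix.star_apply]

lemma diag_eq {A : Matrix V V ℝ} (hA : A.IsHermitian) (j : V) :
    hA.eigenvalues j = ∑ a, ∑ b, (hA.eigenvectorUnitary : Matrix V V ℝ) a j * A a b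
      * (hA.eigenvectorUnitary : Matrix V V ℝ) b j := by
  have h := hA.conjStarAlgAut_star_eigenvectorUnitary
  rw [Unitary.conjStarAlgAut_star_apply] at h
  have h2 := congrFun (congrFun h j) j
  simp only [Matrix.mul_apply, Matrix.diagonal_apply_eq, Function.comp_apply] at h2
  rw [show ((hA.eigenvalues j : ℝ)) = RCLike.ofReal (hA.eigenvalues j) from rfl]
  rw [← h2, Finset.sum_comm]
  apply Finset.sum_congr rfl
  intro a _
  rw [Finset.sum_mul]
  apply Finset.sum_congr rfl
  intro b _
  simp [Matrix.star_apply]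

lemma sum_sq_mix {F : Matrix V V ℝ} {g : V → ℝ}
    (hF : ∀ a b, ∑ i, F a i * F b i = if a = b then (1 : ℝ) else 0)
    (hg : ∑ a, (g a) ^ 2 = 1) :
    ∑ i, (∑ a, F a i * g a) ^ 2 = 1 := by
  calc ∑ i, (∑ a, F a i * g a) ^ 2
      = ∑ i, ∑ a, ∑ b, (F a i * F b i) * (g a * g b) := by
        refine Finset.sum_congr rfl fun i _ => ?_
        rw [sq, Finset.sum_mul_sum]
        exact Finset.sum_congr rfl fun a _ => Finset.sum_congr rfl fun b _ => by ring
    _ = ∑ a, ∑ i, ∑ b, (F a i * F b i) * (g a * g b) := Finset.sum_comm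
    _ = ∑ a, ∑ b, ∑ i, (F a i * F b i) * (g a * g b) :=
        Finset.sum_congr rfl fun a _ => Finset.sum_comm
    _ = ∑ a, ∑ b, (∑ i, F a i * F b i) * (g a * g b) :=
        Finset.sum_congr rfl fun a _ => Finset.sum_congr rfl fun b _ =>
          (Finset.sum_mul _ _ _).symm
    _ = ∑ a, (g a) ^ 2 := by
        refine Finset.sum_congr rfl fun a _ => ?_
        simp [hF, ite_mul, Finset.sum_ite_eq, sq]
    _ = 1 := hg


lemma key_ineq {d : V → ℝ} {Amat : Matrix V V ℝ} (hA : Amat.IsHermitian)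
    (hL : (Matrix.diagonal d - Amat).IsHermitian)
    {k : ℕ} (hk1 : 1 ≤ k) (hk2 : k ≤ Fintype.card V)
    {S : Finset V} (hcard : S.card = k)
    (htop : ∀ v ∈ S, ∀ u ∉ S, d u ≤ d v) :
    sumKLargest hL.eigenvalues k ≤ ∑ v ∈ S, d v
      + sumKLargest (fun v => |hA.eigenvalues v|) k := by
  set U : Matrix V V ℝ := (hL.eigenvectorUnitary : Matrix V V ℝ) with hU
  set W : Matrix V V ℝ := (hA.eigenvectorUnitary : Matrix V V ℝ) with hW
  set μ : V → ℝ := hL.eigenvalues with hμ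
  set ν : V → ℝ := hA.eigenvalues with hν
  have hSne : S.Nonempty := Finset.card_pos.mp (by omega)
  apply sumKLargest_le _ hk2
  intro T hT
  set w : V → ℝ := fun a => ∑ j ∈ T, (U a j) ^ 2 with hw
  set q : V → ℝ := fun i => ∑ j ∈ T, (∑ a, W a i * U a j) ^ 2 with hq
  -- bounds on w
  have hw0 : ∀ a, 0 ≤ w a := fun a => Finset.sum_nonneg fun j _ => sq_nonneg _
  have hw1 : ∀ a, w a ≤ 1 := by
    intro a
    have h1 : w a ≤ ∑ j, (U a j) ^ 2 :=
      Finset.sum_le_sum_of_subset_of_nonneg (Finset.subset_univ T)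
        (fun j _ _ => sq_nonneg _)
    have h2 : ∑ j, (U a j) ^ 2 = 1 := by
      have := rowOrth hL a a
      simpa [sq, hU] using this
    linarith
  have hwsum : ∑ a, w a = (S.card : ℝ) := by
    rw [hcard, hw]
    rw [Finset.sum_comm]
    have : ∀ j, ∑ a, (U a j) ^ 2 = 1 := by
      intro j
      have := colOrth hL j j
      simpa [sq, hU] using this
    rw [Finset.sum_congr rfl fun j _ => this j]
    simp [hT]
  -- bounds on q
  have hq0 : ∀ i, 0 ≤ q i := fun i => Finset.sum_nonneg fun j _ => sq_nonneg _
  have hq1 : ∀ i, q i ≤ 1 := by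
    intro i
    have h1 : q i ≤ ∑ j, (∑ a, W a i * U a j) ^ 2 :=
      Finset.sum_le_sum_of_subset_of_nonneg (Finset.subset_univ T)
        (fun j _ _ => sq_nonneg _)
    have h2 : ∑ j, (∑ a, U a j * W a i) ^ 2 = 1 :=
      sum_sq_mix (F := U) (g := fun a => W a i)
        (fun a b => rowOrth hL a b)
        (by simpa [sq, hW] using colOrth hA i i)
    have h3 : ∑ j, (∑ a, W a i * U a j) ^ 2 = 1 := by
      rw [← h2]
      exact Finset.sum_congr rfl fun j _ => by
        congr 1; exact Finset.sum_congr rfl fun a _ => mul_comm _ _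
    linarith
  have hqsum : ∑ i, q i = (k : ℝ) := by
    rw [hq, Finset.sum_comm]
    have : ∀ j, ∑ i, (∑ a, W a i * U a j) ^ 2 = 1 := by
      intro j
      exact sum_sq_mix (F := W) (g := fun a => U a j)
        (fun a b => rowOrth hA a b) (by simpa [sq, hU] using colOrth hL j j)
    rw [Finset.sum_congr rfl fun j _ => this j]
    simp [hT]
  -- the identity
  have stepA : ∀ j, μ j = (∑ a, (U a j) ^ 2 * d a) - ∑ a, ∑ b, U a j * Amat a b * U b j := by
    intro j
    rw [hμ, diag_eq hL j]
    rw [← Finset.sum_sub_distrib]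
    apply Finset.sum_congr rfl
    intro a _
    calc ∑ b, U a j * (Matrix.diagonal d - Amat) a b * U b j
        = ∑ b, (U a j * (if a = b then d a else 0) * U b j - U a j * Amat a b * U b j) := by
          refine Finset.sum_congr rfl fun b _ => ?_
          rw [Matrix.sub_apply, Matrix.diagonal_apply]
          ring
      _ = (∑ b, U a j * (if a = b then d a else 0) * U b j)
            - ∑ b, U a j * Amat a b * U b j := Finset.sum_sub_distrib _ _
      _ = (U a j) ^ 2 * d a - ∑ b, U a j * Amat a b * U b j := by
          congr 1
          simp [mul_ite, ite_mul, mul_zero, zero_mul, Finset.sum_ite_eq]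
          ring
  have stepB : ∀ j, ∑ a, ∑ b, U a j * Amat a b * U b j
      = ∑ i, ν i * (∑ a, W a i * U a j) ^ 2 := by
    intro j
    calc ∑ a, ∑ b, U a j * Amat a b * U b j
        = ∑ a, ∑ b, ∑ i, (W a i * U a j) * (ν i * (W b i * U b j)) := by
          refine Finset.sum_congr rfl fun a _ => Finset.sum_congr rfl fun b _ => ?_
          rw [entry_eq hA a b, Finset.mul_sum, Finset.sum_mul]
          exact Finset.sum_congr rfl fun i _ => by rw [hν]; ring
      _ = ∑ a, ∑ i, ∑ b, (W a i * U a j) * (ν i * (W b i * U b j)) :=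
          Finset.sum_congr rfl fun a _ => Finset.sum_comm
      _ = ∑ i, ∑ a, ∑ b, (W a i * U a j) * (ν i * (W b i * U b j)) := Finset.sum_comm
      _ = ∑ i, ν i * (∑ a, W a i * U a j) ^ 2 := by
          refine Finset.sum_congr rfl fun i _ => ?_
          rw [← Finset.sum_mul_sum, ← Finset.mul_sum]
          ring
  have identity : ∑ j ∈ T, μ j = ∑ a, w a * d a - ∑ i, ν i * q i := by
    calc ∑ j ∈ T, μ j
        = ∑ j ∈ T, ((∑ a, (U a j) ^ 2 * d a) - ∑ i, ν i * (∑ a, W a i * U a j) ^ 2) := by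
          refine Finset.sum_congr rfl fun j _ => ?_
          rw [stepA j, stepB j]
      _ = (∑ j ∈ T, ∑ a, (U a j) ^ 2 * d a)
            - ∑ j ∈ T, ∑ i, ν i * (∑ a, W a i * U a j) ^ 2 := Finset.sum_sub_distrib _ _
      _ = ∑ a, w a * d a - ∑ i, ν i * q i := by
          congr 1
          · rw [Finset.sum_comm]
            exact Finset.sum_congr rfl fun a _ => by rw [hw, Finset.sum_mul]
          · rw [Finset.sum_comm]
            exact Finset.sum_congr rfl fun i _ => by rw [hq, Finset.mul_sum]
  -- bound the degree term
  have hdeg_bound : ∑ a, w a * d a ≤ ∑ v ∈ S, d v :=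
    weighted_sum_le hSne hw0 hw1 (by rw [hwsum]) htop
  -- bound the adjacency term
  have habs : -∑ i, ν i * q i ≤ ∑ i, q i * |ν i| := by
    rw [← Finset.sum_neg_distrib]
    refine Finset.sum_le_sum fun i _ => ?_
    calc -(ν i * q i) = q i * (-ν i) := by ring
      _ ≤ q i * |ν i| := mul_le_mul_of_nonneg_left (neg_le_abs _) (hq0 i)
  obtain ⟨S', hS'card, hS'top⟩ := exists_top_subset (fun v => |ν v|) hk2
  have hS'ne : S'.Nonempty := Finset.card_pos.mp (by omega)
  have hq_bound : ∑ i, q i * |ν i| ≤ ∑ v ∈ S', |ν v| :=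
    weighted_sum_le hS'ne hq0 hq1 (by rw [hqsum, hS'card]) hS'top
  have hfin : ∑ v ∈ S', |ν v| ≤ sumKLargest (fun v => |ν v|) k :=
    le_sumKLargest _ hS'card
  linarith [identity, hdeg_bound, habs, hq_bound, hfin]

lemma lapEig_eq (G : SimpleGraph V) [DecidableRel G.Adj] :
    lapEig G = (lapMatrix_isHermitian G).eigenvalues := by
  haveI : Subsingleton (DecidableRel G.Adj) :=
    ⟨fun a b => funext fun x => funext fun y => Subsingleton.elim _ _⟩
  unfold lapEig
  congr!

lemma adjEig_eq (G : SimpleGraph V) [DecidableRel G.Adj] :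
    adjEig G = (adjMatrix_isHermitian G).eigenvalues := by
  haveI : Subsingleton (DecidableRel G.Adj) :=
    ⟨fun a b => funext fun x => funext fun y => Subsingleton.elim _ _⟩
  unfold adjEig
  congr!

variable (G : SimpleGraph V) [DecidableRel G.Adj]

lemma numEdges_eq : numEdges G = G.edgeFinset.card := by
  unfold numEdges
  congr!

lemma degree_as_sum (v : V) :
    (G.degree v : ℝ) = ∑ w, (if G.Adj v w then (1 : ℝ) else 0) := by
  rw [← SimpleGraph.card_neighborFinset_eq_degree, SimpleGraph.neighborFinset_eq_filter]
  rw [Finset.card_filter]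
  push_cast
  simp

lemma edgesWithin_double (S : Finset V) :
    2 * (edgesWithin G S : ℝ) = ∑ v ∈ S, ∑ w ∈ S, (if G.Adj v w then (1 : ℝ) else 0) := by
  classical
  let H : SimpleGraph V :=
    { Adj := fun v w => G.Adj v w ∧ v ∈ S ∧ w ∈ S
      symm := ⟨fun v w h => ⟨h.1.symm, h.2.2, h.2.1⟩⟩
      loopless := ⟨fun v h => G.loopless.irrefl v h.1⟩ }
  haveI : DecidableRel H.Adj := fun v w =>
    inferInstanceAs (Decidable (G.Adj v w ∧ v ∈ S ∧ w ∈ S))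
  have hHadj : ∀ v w, H.Adj v w ↔ (G.Adj v w ∧ v ∈ S ∧ w ∈ S) := fun v w => Iff.rfl
  have hedge : H.edgeFinset = G.edgeFinset.filter (fun e => ∀ v ∈ e, v ∈ S) := by
    ext e
    induction e using Sym2.ind with
    | _ x y =>
      simp only [SimpleGraph.mem_edgeFinset, Finset.mem_filter, SimpleGraph.mem_edgeSet,
        hHadj, Sym2.mem_iff]
      constructor
      · rintro ⟨h, hx, hy⟩
        exact ⟨h, fun v hv => by rcases hv with rfl | rfl <;> assumption⟩
      · rintro ⟨h, hall⟩
        exact ⟨h, hall x (Or.inl rfl), hall y (Or.inr rfl)⟩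
  have hcardH : H.edgeFinset.card = edgesWithin G S := by
    rw [hedge]
    unfold edgesWithin
    congr!
  have hdegH : ∀ v, (H.degree v : ℝ) = ∑ w, (if H.Adj v w then (1 : ℝ) else 0) :=
    degree_as_sum H
  have hsum : ∑ v, (H.degree v : ℝ) = 2 * (H.edgeFinset.card : ℝ) := by
    have := SimpleGraph.sum_degrees_eq_twice_card_edges H
    exact_mod_cast congrArg (Nat.cast (R := ℝ)) this
  have hrestrict : ∑ v, (H.degree v : ℝ)
      = ∑ v ∈ S, ∑ w ∈ S, (if G.Adj v w then (1 : ℝ) else 0) := by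
    rw [Finset.sum_congr rfl fun v _ => hdegH v]
    have hite : ∀ v w, (if H.Adj v w then (1 : ℝ) else 0)
        = (if v ∈ S then (if w ∈ S then (if G.Adj v w then (1 : ℝ) else 0) else 0) else 0) := by
      intro v w
      by_cases h1 : v ∈ S <;> by_cases h2 : w ∈ S <;> by_cases h3 : G.Adj v w <;>
        simp [hHadj, h1, h2, h3]
    calc ∑ v, ∑ w, (if H.Adj v w then (1 : ℝ) else 0)
        = ∑ v, ∑ w, (if v ∈ S then (if w ∈ S then (if G.Adj v w then (1 : ℝ) else 0) else 0)
            else 0) := Finset.sum_congr rfl fun v _ => Finset.sum_congr rfl fun w _ => hite v w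
      _ = ∑ v, (if v ∈ S then ∑ w, (if w ∈ S then (if G.Adj v w then (1 : ℝ) else 0) else 0)
            else 0) := by
          refine Finset.sum_congr rfl fun v _ => ?_
          by_cases h : v ∈ S <;> simp [h]
      _ = ∑ v ∈ S, ∑ w, (if w ∈ S then (if G.Adj v w then (1 : ℝ) else 0) else 0) := by
          rw [Finset.sum_ite_mem, Finset.univ_inter]
      _ = ∑ v ∈ S, ∑ w ∈ S, (if G.Adj v w then (1 : ℝ) else 0) := by
          refine Finset.sum_congr rfl fun v _ => ?_
          rw [Finset.sum_ite_mem, Finset.univ_inter]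
  rw [← hcardH, ← hsum, hrestrict]

lemma degree_sum_eq {S : Finset V} :
    ∑ v ∈ S, (G.degree v : ℝ)
      = (numEdges G : ℝ) + (edgesWithin G S : ℝ) - (edgesWithin G Sᶜ : ℝ) := by
  classical
  set r : V → V → ℝ := fun v w => if G.Adj v w then (1 : ℝ) else 0 with hr
  have hrsymm : ∀ v w, r v w = r w v := by
    intro v w; simp only [hr, SimpleGraph.adj_comm]
  have hA : ∑ v ∈ S, (G.degree v : ℝ) = ∑ v ∈ S, (∑ w ∈ S, r v w + ∑ w ∈ Sᶜ, r v w) := by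
    refine Finset.sum_congr rfl fun v _ => ?_
    rw [Finset.sum_add_sum_compl, degree_as_sum G v]
  have hB : 2 * (edgesWithin G S : ℝ) = ∑ v ∈ S, ∑ w ∈ S, r v w := edgesWithin_double G S
  have hB' : 2 * (edgesWithin G Sᶜ : ℝ) = ∑ v ∈ Sᶜ, ∑ w ∈ Sᶜ, r v w := edgesWithin_double G Sᶜ
  have hC : 2 * (numEdges G : ℝ) = ∑ v, ∑ w, r v w := by
    rw [numEdges_eq]
    have h1 := SimpleGraph.sum_degrees_eq_twice_card_edges G
    have h2 : ∑ v, (G.degree v : ℝ) = 2 * (G.edgeFinset.card : ℝ) := by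
      exact_mod_cast congrArg (Nat.cast (R := ℝ)) h1
    rw [← h2]
    exact Finset.sum_congr rfl fun v _ => degree_as_sum G v
  have hsplit : ∑ v, ∑ w, r v w
      = (∑ v ∈ S, ∑ w ∈ S, r v w + ∑ v ∈ S, ∑ w ∈ Sᶜ, r v w)
        + (∑ v ∈ Sᶜ, ∑ w ∈ S, r v w + ∑ v ∈ Sᶜ, ∑ w ∈ Sᶜ, r v w) := by
    have inner : ∀ (X : Finset V), ∑ v ∈ X, ∑ w, r v w
        = ∑ v ∈ X, ∑ w ∈ S, r v w + ∑ v ∈ X, ∑ w ∈ Sᶜ, r v w := by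
      intro X
      rw [← Finset.sum_add_distrib]
      exact Finset.sum_congr rfl fun v _ => (Finset.sum_add_sum_compl S _).symm
    rw [← Finset.sum_add_sum_compl S (fun v => ∑ w, r v w), inner S, inner Sᶜ]
  have hsymm2 : ∑ v ∈ Sᶜ, ∑ w ∈ S, r v w = ∑ v ∈ S, ∑ w ∈ Sᶜ, r v w := by
    rw [Finset.sum_comm]
    exact Finset.sum_congr rfl fun v _ => Finset.sum_congr rfl fun w _ => hrsymm w v
  have hAsum : ∑ v ∈ S, (∑ w ∈ S, r v w + ∑ w ∈ Sᶜ, r v w)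
      = ∑ v ∈ S, ∑ w ∈ S, r v w + ∑ v ∈ S, ∑ w ∈ Sᶜ, r v w := Finset.sum_add_distrib
  linarith

end AuxLemmas

/-- `s_k(G) ≤ m + e(S_k) - e(V∖S_k) + ‖A(G)‖_(k)` where `S_k` is a set of
`k` vertices of largest degrees and `‖A(G)‖_(k)` is the sum of the `k` largest
absolute values of adjacency eigenvalues (singular values). -/
theorem sLap_le_kyFan {V : Type*} [Fintype V] [DecidableEq V] (G : SimpleGraph V)
    [DecidableRel G.Adj] (k : ℕ) (hk1 : 1 ≤ k) (hk2 : k ≤ Fintype.card V)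
    (S : Finset V) (hcard : S.card = k)
    (hdeg : ∀ v ∈ S, ∀ w ∉ S, G.degree w ≤ G.degree v) :
    sLap G k ≤ (numEdges G : ℝ) + (edgesWithin G S : ℝ) - (edgesWithin G Sᶜ : ℝ)
      + sumKLargest (fun v => |adjEig G v|) k := by
  have htopR : ∀ v ∈ S, ∀ u ∉ S, (G.degree u : ℝ) ≤ (G.degree v : ℝ) :=
    fun v hv u hu => Nat.cast_le.mpr (hdeg v hv u hu)
  have key : sumKLargest (lapEig G) k
      ≤ ∑ v ∈ S, (G.degree v : ℝ) + sumKLargest (fun v => |adjEig G v|) k := by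
    rw [lapEig_eq G, adjEig_eq G]
    exact key_ineq (adjMatrix_isHermitian G) (lapMatrix_isHermitian G) hk1 hk2 hcard htopR
  have hds := degree_sum_eq G (S := S)
  unfold sLap
  linarith

end Brouwer
end

section
/- Let G be a bipartite simple graph on n vertices with m edges. If k ≥ √(32n), then BC_k(G) holds; moreover, if m ≥ √32 · n^{3/2}, then BC_k(G) holds for every k with 1 ≤ k ≤ n. -/
open Finset Matrix

namespace Brouwer

variable {V : Type*}

section BCProof
set_option linter.unusedSectionVars false
variable [Fintype V] [DecidableEq V]

section EV
variable (G : SimpleGraph V) [DecidableRel G.Adj]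

noncomputable def evec (i : V) : V → ℝ := fun v => (lapMatrix_isHermitian G).eigenvectorBasis i v

lemma evec_ortho (i j : V) :
    ∑ v, evec G i v * evec G j v = if i = j then 1 else 0 := by
  have h := (lapMatrix_isHermitian G).eigenvectorBasis.orthonormal
  rw [orthonormal_iff_ite] at h
  have := h i j
  simp [PiLp.inner_apply, RCLike.inner_apply, evec] at this
  refine Eq.trans ?_ this
  exact Finset.sum_congr rfl fun v _ => mul_comm _ _

lemma evec_norm (i : V) : ∑ v, evec G i v * evec G i v = 1 := by
  simpa using evec_ortho G i i

lemma evec_complete (v w : V) :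
    ∑ i, evec G i v * evec G i w = if v = w then 1 else 0 := by
  have h := (lapMatrix_isHermitian G).eigenvectorBasis.sum_inner_mul_inner
    (EuclideanSpace.single v (1:ℝ)) (EuclideanSpace.single w (1:ℝ))
  simp only [EuclideanSpace.inner_single_left, EuclideanSpace.inner_single_right,
    EuclideanSpace.single_apply, one_mul, mul_one, conj_trivial, starRingEnd_apply,
    star_one] at h
  have h2 : (if w = v then (1:ℝ) else 0) = (if v = w then 1 else 0) := by
    by_cases hh : v = w
    · simp [hh]
    · rw [if_neg hh, if_neg (fun hc => hh hc.symm)]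
  rw [h2] at h
  rw [← h]
  rfl

lemma evec_mulVec (i : V) :
    (G.lapMatrix ℝ *ᵥ evec G i) = fun v => (lapMatrix_isHermitian G).eigenvalues i * evec G i v := by
  have h := (lapMatrix_isHermitian G).mulVec_eigenvectorBasis i
  funext v
  exact congrFun h v

lemma eig_eq_quad (i : V) :
    (lapMatrix_isHermitian G).eigenvalues i = evec G i ⬝ᵥ (G.lapMatrix ℝ *ᵥ evec G i) := by
  rw [evec_mulVec]
  have h := evec_norm G i
  unfold dotProduct
  calc (lapMatrix_isHermitian G).eigenvalues i
      = (lapMatrix_isHermitian G).eigenvalues i * ∑ v, evec G i v * evec G i v := by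
        rw [h, mul_one]
    _ = ∑ v, evec G i v * ((lapMatrix_isHermitian G).eigenvalues i * evec G i v) := by
        rw [Finset.mul_sum]; exact Finset.sum_congr rfl fun v _ => by ring

lemma eig_le_card (i : V) :
    (lapMatrix_isHermitian G).eigenvalues i ≤ Fintype.card V := by
  set x := evec G i with hx
  have hq : evec G i ⬝ᵥ (G.lapMatrix ℝ *ᵥ evec G i)
      = (∑ a, ∑ b, if G.Adj a b then (x a - x b)^2 else 0)/2 := by
    rw [← Matrix.toLinearMap₂'_apply', SimpleGraph.lapMatrix_toLinearMap₂']
  have hnorm : ∑ v, x v * x v = 1 := evec_norm G i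
  have hb : (∑ a, ∑ b, if G.Adj a b then (x a - x b)^2 else 0)
      ≤ ∑ a : V, ∑ b : V, (x a - x b)^2 := by
    refine Finset.sum_le_sum fun a _ => Finset.sum_le_sum fun b _ => ?_
    by_cases hadj : G.Adj a b <;> simp [hadj] <;> positivity
  have inner : ∀ a : V, ∑ b : V, (x a - x b)^2
      = (Fintype.card V : ℝ) * (x a * x a) + (∑ v, x v * x v) - 2 * x a * (∑ v, x v) := by
    intro a
    calc ∑ b : V, (x a - x b)^2
        = ∑ b : V, (x a * x a + x b * x b - 2 * x a * x b) :=
          Finset.sum_congr rfl fun b _ => by ring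
      _ = (∑ _b : V, x a * x a) + (∑ b, x b * x b) - ∑ b, 2 * x a * x b := by
          rw [Finset.sum_sub_distrib, Finset.sum_add_distrib]
      _ = (Fintype.card V : ℝ) * (x a * x a) + (∑ v, x v * x v) - 2 * x a * (∑ v, x v) := by
          rw [Finset.sum_const, card_univ, nsmul_eq_mul, ← Finset.mul_sum]
  have hexp : ∑ a : V, ∑ b : V, (x a - x b)^2
      = 2 * (Fintype.card V : ℝ) - 2 * (∑ v, x v)^2 := by
    calc ∑ a : V, ∑ b : V, (x a - x b)^2
        = ∑ a : V, ((Fintype.card V : ℝ) * (x a * x a) + (∑ v, x v * x v) - 2 * x a * (∑ v, x v)) :=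
          Finset.sum_congr rfl fun a _ => inner a
      _ = (∑ a, (Fintype.card V : ℝ) * (x a * x a)) + (∑ _a : V, ∑ v, x v * x v)
            - ∑ a, 2 * x a * (∑ v, x v) := by
          rw [Finset.sum_sub_distrib, Finset.sum_add_distrib]
      _ = (Fintype.card V : ℝ) * 1 + (Fintype.card V : ℝ) * 1 - 2 * (∑ v, x v)^2 := by
          have hcross : (∑ a, 2 * x a * (∑ v, x v)) = 2 * (∑ v, x v)^2 := by
            rw [← Finset.sum_mul, ← Finset.mul_sum]; ring
          rw [← Finset.mul_sum, hnorm, Finset.sum_const, card_univ, nsmul_eq_mul, hcross]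
      _ = 2 * (Fintype.card V : ℝ) - 2 * (∑ v, x v)^2 := by ring
  rw [eig_eq_quad, hq]
  nlinarith [sq_nonneg (∑ v, x v)]


lemma sum_adj_row (v : V) :
    ∑ w, (if G.Adj v w then (1:ℝ) else 0) = G.degree v := by
  simp [Finset.sum_boole, SimpleGraph.degree, SimpleGraph.neighborFinset_eq_filter]

lemma adj_double_sum :
    ∑ v, ∑ w, (if G.Adj v w then (1:ℝ) else 0) = 2 * G.edgeFinset.card := by
  calc ∑ v, ∑ w, (if G.Adj v w then (1:ℝ) else 0) = ∑ v, (G.degree v : ℝ) :=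
        Finset.sum_congr rfl fun v _ => sum_adj_row G v
    _ = ((∑ v, G.degree v : ℕ) : ℝ) := by push_cast; rfl
    _ = 2 * G.edgeFinset.card := by rw [G.sum_degrees_eq_twice_card_edges]; push_cast; ring

lemma lap_quadform (x : V → ℝ) :
    x ⬝ᵥ (G.lapMatrix ℝ *ᵥ x) =
      (∑ v, (G.degree v : ℝ) * x v ^ 2) - ∑ v, ∑ w, (if G.Adj v w then x v * x w else 0) := by
  rw [SimpleGraph.lapMatrix, Matrix.sub_mulVec, dotProduct_sub,
    SimpleGraph.dotProduct_mulVec_adjMatrix]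
  congr 1
  simp only [dotProduct, SimpleGraph.degMatrix_mulVec_apply]
  exact Finset.sum_congr rfl fun v _ => by ring

theorem key_bound (hbip : G.Colorable 2) (T : Finset V) :
    ∑ i ∈ T, (lapMatrix_isHermitian G).eigenvalues i ≤
      (G.edgeFinset.card : ℝ) + (T.card : ℝ)^2/4
        + Real.sqrt (2 * T.card * G.edgeFinset.card) := by
  obtain ⟨C⟩ := hbip
  set m : ℝ := (G.edgeFinset.card : ℝ) with hm
  set k : ℝ := (T.card : ℝ) with hk
  have hm0 : 0 ≤ m := Nat.cast_nonneg _
  have hk0 : 0 ≤ k := Nat.cast_nonneg _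
  set x : V → V → ℝ := evec G with hxdef
  set p : V → ℝ := fun v => ∑ i ∈ T, x i v ^ 2 with hpdef
  have hp0 : ∀ v, 0 ≤ p v := fun v => Finset.sum_nonneg fun i _ => sq_nonneg _
  have hxnorm : ∀ i, ∑ v, x i v ^ 2 = 1 := by
    intro i
    have := evec_norm G i
    rw [hxdef]
    calc ∑ v, evec G i v ^ 2 = ∑ v, evec G i v * evec G i v :=
          Finset.sum_congr rfl fun v _ => sq (evec G i v) ▸ rfl
      _ = 1 := this
  have hp1 : ∀ v, p v ≤ 1 := by
    intro v
    have hsub : p v ≤ ∑ i : V, x i v ^ 2 :=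
      Finset.sum_le_sum_of_subset_of_nonneg (Finset.subset_univ T) fun i _ _ => sq_nonneg _
    have hone : ∑ i : V, x i v ^ 2 = 1 := by
      have := evec_complete G v v
      simp only [if_pos rfl] at this
      calc ∑ i : V, x i v ^ 2 = ∑ i : V, evec G i v * evec G i v :=
            Finset.sum_congr rfl fun i _ => by rw [hxdef, sq]
        _ = 1 := this
    linarith
  have hpk : ∑ v, p v = k := by
    rw [hpdef]
    rw [Finset.sum_comm]
    calc ∑ i ∈ T, ∑ v, x i v ^ 2 = ∑ i ∈ T, (1:ℝ) :=
          Finset.sum_congr rfl fun i _ => hxnorm i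
      _ = k := by rw [Finset.sum_const, nsmul_eq_mul, mul_one, hk]
  -- decompose the eigenvalue sum
  set A : V → ℝ := fun i => ∑ v, ∑ w, (if G.Adj v w then x i v * x i w else 0) with hAdef
  have hdecomp : ∑ i ∈ T, (lapMatrix_isHermitian G).eigenvalues i
      = (∑ v, (G.degree v : ℝ) * p v) - ∑ i ∈ T, A i := by
    have h1 : ∀ i, (lapMatrix_isHermitian G).eigenvalues i
        = (∑ v, (G.degree v : ℝ) * x i v ^ 2) - A i := by
      intro i
      rw [eig_eq_quad, lap_quadform]
    calc ∑ i ∈ T, (lapMatrix_isHermitian G).eigenvalues i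
        = ∑ i ∈ T, ((∑ v, (G.degree v : ℝ) * x i v ^ 2) - A i) :=
          Finset.sum_congr rfl fun i _ => h1 i
      _ = (∑ i ∈ T, ∑ v, (G.degree v : ℝ) * x i v ^ 2) - ∑ i ∈ T, A i := by
          rw [Finset.sum_sub_distrib]
      _ = (∑ v, (G.degree v : ℝ) * p v) - ∑ i ∈ T, A i := by
          congr 1
          rw [Finset.sum_comm]
          exact Finset.sum_congr rfl fun v _ => by rw [hpdef, Finset.mul_sum]
  -- bound the degree part
  have hdeg : (∑ v, (G.degree v : ℝ) * p v) ≤ m + k^2/4 := by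
    have hstepA : (∑ v, (G.degree v : ℝ) * p v)
        = ∑ v, ∑ w, (if G.Adj v w then p v else 0) := by
      refine Finset.sum_congr rfl fun v _ => ?_
      rw [← sum_adj_row G v, Finset.sum_mul]
      exact Finset.sum_congr rfl fun w _ => by split <;> simp
    have hswap : (∑ v, ∑ w, (if G.Adj v w then p v else 0))
        = ∑ v, ∑ w, (if G.Adj v w then p w else 0) := by
      rw [Finset.sum_comm]
      refine Finset.sum_congr rfl fun v _ => Finset.sum_congr rfl fun w _ => ?_
      exact if_congr (G.adj_comm w v) rfl rfl
    have hdouble : 2 * (∑ v, ∑ w, (if G.Adj v w then p v else 0))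
        = ∑ v, ∑ w, (if G.Adj v w then p v + p w else 0) := by
      rw [two_mul]
      nth_rewrite 2 [hswap]
      rw [← Finset.sum_add_distrib]
      refine Finset.sum_congr rfl fun v _ => ?_
      rw [← Finset.sum_add_distrib]
      refine Finset.sum_congr rfl fun w _ => ?_
      split <;> simp
    set Q : ℝ := ∑ v, ∑ w, (if G.Adj v w then p v * p w else 0) with hQdef
    have hstepC : (∑ v, ∑ w, (if G.Adj v w then p v + p w else 0))
        ≤ (∑ v, ∑ w, (if G.Adj v w then (1:ℝ) else 0)) + Q := by
      rw [← Finset.sum_add_distrib]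
      refine Finset.sum_le_sum fun v _ => ?_
      rw [← Finset.sum_add_distrib]
      refine Finset.sum_le_sum fun w _ => ?_
      split
      · nlinarith [hp0 v, hp0 w, hp1 v, hp1 w]
      · simp
    -- bound Q via the 2-coloring
    set P0 : ℝ := ∑ v, (if C v = 0 then p v else 0) with hP0def
    set P1 : ℝ := ∑ v, (if C v = 1 then p v else 0) with hP1def
    have hfin2 : ∀ c d : Fin 2, c ≠ d → (c = 0 ∧ d = 1) ∨ (c = 1 ∧ d = 0) := by decide
    have hQle : Q ≤ P0 * P1 + P1 * P0 := by
      rw [hQdef, hP0def, hP1def, Finset.sum_mul_sum, Finset.sum_mul_sum,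
        ← Finset.sum_add_distrib]
      refine Finset.sum_le_sum fun v _ => ?_
      rw [← Finset.sum_add_distrib]
      refine Finset.sum_le_sum fun w _ => ?_
      by_cases hadj : G.Adj v w
      · rcases hfin2 _ _ (C.valid hadj) with ⟨h0, h1⟩ | ⟨h0, h1⟩ <;>
          simp [hadj, h0, h1, hp0 v, hp0 w]
      · have t1 : (0:ℝ) ≤ (if C v = 0 then p v else 0) * (if C w = 1 then p w else 0) := by
          apply mul_nonneg <;> split <;> simp [hp0]
        have t2 : (0:ℝ) ≤ (if C v = 1 then p v else 0) * (if C w = 0 then p w else 0) := by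
          apply mul_nonneg <;> split <;> simp [hp0]
        simp only [if_neg hadj]
        linarith
    have hP0nn : 0 ≤ P0 := Finset.sum_nonneg fun v _ => by split <;> simp [hp0]
    have hP1nn : 0 ≤ P1 := Finset.sum_nonneg fun v _ => by split <;> simp [hp0]
    have hPsum : P0 + P1 = k := by
      rw [hP0def, hP1def, ← Finset.sum_add_distrib, ← hpk]
      refine Finset.sum_congr rfl fun v _ => ?_
      have : C v = 0 ∨ C v = 1 := by
        have : ∀ c : Fin 2, c = 0 ∨ c = 1 := by decide
        exact this (C v)
      rcases this with h | h <;> simp [h]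
    have hQk : Q ≤ k^2/2 := by nlinarith [sq_nonneg (P0 - P1)]
    have h2m : (∑ v, ∑ w, (if G.Adj v w then (1:ℝ) else 0)) = 2 * m := adj_double_sum G
    rw [hstepA]
    nlinarith [hdouble, hstepC, hQk, h2m]
  -- bound the adjacency part
  have hAsq : ∀ i ∈ T, (A i)^2 ≤ ∑ v, ((G.adjMatrix ℝ *ᵥ x i) v)^2 := by
    intro i _
    have hdot : A i = x i ⬝ᵥ (G.adjMatrix ℝ *ᵥ x i) := by
      rw [SimpleGraph.dotProduct_mulVec_adjMatrix]
    have hcs := Finset.sum_mul_sq_le_sq_mul_sq Finset.univ (x i) (fun v => (G.adjMatrix ℝ *ᵥ x i) v)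
    rw [hdot]
    calc (x i ⬝ᵥ (G.adjMatrix ℝ *ᵥ x i))^2
        = (∑ v, x i v * (G.adjMatrix ℝ *ᵥ x i) v)^2 := rfl
      _ ≤ (∑ v, x i v ^ 2) * (∑ v, ((G.adjMatrix ℝ *ᵥ x i) v)^2) := hcs
      _ = ∑ v, ((G.adjMatrix ℝ *ᵥ x i) v)^2 := by rw [hxnorm i, one_mul]
  have hfull : ∑ i : V, ∑ v, ((G.adjMatrix ℝ *ᵥ x i) v)^2 = 2 * m := by
    rw [Finset.sum_comm]
    have hv : ∀ v : V, ∑ i : V, ((G.adjMatrix ℝ *ᵥ x i) v)^2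
        = ∑ w, (if G.Adj v w then (1:ℝ) else 0) := by
      intro v
      have hexp : ∀ i : V, ((G.adjMatrix ℝ *ᵥ x i) v)^2
          = ∑ w, ∑ w', ((if G.Adj v w then (1:ℝ) else 0) * (if G.Adj v w' then (1:ℝ) else 0))
              * (x i w * x i w') := by
        intro i
        have h1 : (G.adjMatrix ℝ *ᵥ x i) v = ∑ w, (if G.Adj v w then (1:ℝ) else 0) * x i w := by
          simp [Matrix.mulVec, dotProduct, SimpleGraph.adjMatrix_apply]
        rw [h1, sq, Finset.sum_mul_sum]
        exact Finset.sum_congr rfl fun w _ => Finset.sum_congr rfl fun w' _ => by ring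
      calc ∑ i : V, ((G.adjMatrix ℝ *ᵥ x i) v)^2
          = ∑ i : V, ∑ w, ∑ w', ((if G.Adj v w then (1:ℝ) else 0) * (if G.Adj v w' then (1:ℝ) else 0))
              * (x i w * x i w') := Finset.sum_congr rfl fun i _ => hexp i
        _ = ∑ w, ∑ w', ((if G.Adj v w then (1:ℝ) else 0) * (if G.Adj v w' then (1:ℝ) else 0))
              * ∑ i : V, x i w * x i w' := by
            rw [Finset.sum_comm]
            refine Finset.sum_congr rfl fun w _ => ?_
            rw [Finset.sum_comm]
            refine Finset.sum_congr rfl fun w' _ => ?_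
            rw [Finset.mul_sum]
        _ = ∑ w, ∑ w', ((if G.Adj v w then (1:ℝ) else 0) * (if G.Adj v w' then (1:ℝ) else 0))
              * (if w = w' then (1:ℝ) else 0) := by
            refine Finset.sum_congr rfl fun w _ => Finset.sum_congr rfl fun w' _ => ?_
            rw [show ∑ i : V, x i w * x i w' = if w = w' then (1:ℝ) else 0 from evec_complete G w w']
        _ = ∑ w, (if G.Adj v w then (1:ℝ) else 0) := by
            refine Finset.sum_congr rfl fun w _ => ?_
            rw [Finset.sum_eq_single w]
            · by_cases hadj : G.Adj v w <;> simp [hadj]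
            · intro w' _ hne
              rw [if_neg (fun hh : w = w' => hne hh.symm), mul_zero]
            · intro habs
              exact absurd (Finset.mem_univ w) habs
    calc ∑ v, ∑ i : V, ((G.adjMatrix ℝ *ᵥ x i) v)^2
        = ∑ v, ∑ w, (if G.Adj v w then (1:ℝ) else 0) :=
          Finset.sum_congr rfl fun v _ => hv v
      _ = 2 * m := adj_double_sum G
  have hAbound : ∑ i ∈ T, (-(A i)) ≤ Real.sqrt (2 * k * m) := by
    have h1 : ∑ i ∈ T, (-(A i)) ≤ ∑ i ∈ T, |A i| :=
      Finset.sum_le_sum fun i _ => neg_le_abs _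
    have h2 : (∑ i ∈ T, |A i|)^2 ≤ 2 * k * m := by
      calc (∑ i ∈ T, |A i|)^2 ≤ T.card * ∑ i ∈ T, |A i|^2 := sq_sum_le_card_mul_sum_sq
        _ = k * ∑ i ∈ T, (A i)^2 := by
            rw [hk]; congr 1; exact Finset.sum_congr rfl fun i _ => sq_abs _
        _ ≤ k * (2 * m) := by
            have hs : ∑ i ∈ T, (A i)^2 ≤ 2 * m := by
              calc ∑ i ∈ T, (A i)^2 ≤ ∑ i ∈ T, ∑ v, ((G.adjMatrix ℝ *ᵥ x i) v)^2 :=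
                    Finset.sum_le_sum hAsq
                _ ≤ ∑ i : V, ∑ v, ((G.adjMatrix ℝ *ᵥ x i) v)^2 :=
                    Finset.sum_le_sum_of_subset_of_nonneg (Finset.subset_univ T)
                      (fun i _ _ => Finset.sum_nonneg fun v _ => sq_nonneg _)
                _ = 2 * m := hfull
            exact mul_le_mul_of_nonneg_left hs hk0
        _ = 2 * k * m := by ring
    have h3 : ∑ i ∈ T, |A i| ≤ Real.sqrt (2 * k * m) := by
      rw [show (2 * k * m) = Real.sqrt (2*k*m) ^ 2 from
        (Real.sq_sqrt (by positivity)).symm] at h2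
      have habs0 : 0 ≤ ∑ i ∈ T, |A i| := Finset.sum_nonneg fun i _ => abs_nonneg _
      nlinarith [Real.sqrt_nonneg (2*k*m)]
    linarith
  have : ∑ i ∈ T, (-(A i)) = -∑ i ∈ T, A i := by rw [Finset.sum_neg_distrib]
  rw [hdecomp]
  linarith [hdeg, hAbound, this]

end EV


lemma lapEig_spec (G : SimpleGraph V) (inst : DecidableRel G.Adj) :
    lapEig G = (@lapMatrix_isHermitian V _ _ G inst).eigenvalues := by
  unfold lapEig
  congr!

lemma numEdges_spec (G : SimpleGraph V) [inst : Fintype G.edgeSet] :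
    numEdges G = G.edgeFinset.card := by
  unfold numEdges
  congr!

lemma choose_two_cast (k : ℕ) : (((k+1).choose 2 : ℕ) : ℝ) = (k:ℝ)*((k:ℝ)+1)/2 := by
  have h1 : (k+1).choose 2 = (k+1)*k/2 := by
    rw [Nat.choose_two_right]
    simp
  have hdvd : 2 ∣ (k+1)*k := by
    have := Nat.even_mul_succ_self k
    rw [mul_comm] at this
    exact this.two_dvd
  rw [h1, Nat.cast_div hdvd (by norm_num)]
  push_cast
  ring


end BCProof

/-- for bipartite `G`, `BC_k(G)` holds whenever `k ≥ √(32n)`; moreover if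
`m ≥ √32 · n^{3/2}` then `BC_k(G)` holds for every `1 ≤ k ≤ n`. -/
theorem bc_bipartite {V : Type*} [Fintype V] [DecidableEq V] (G : SimpleGraph V)
    (hbip : G.Colorable 2) :
    (∀ k : ℕ, 1 ≤ k → k ≤ Fintype.card V →
      Real.sqrt (32 * Fintype.card V) ≤ (k : ℝ) → BC G k) ∧
    (Real.sqrt 32 * (Fintype.card V : ℝ) ^ ((3 : ℝ) / 2) ≤ (numEdges G : ℝ) →
      ∀ k : ℕ, 1 ≤ k → k ≤ Fintype.card V → BC G k) := by
  classical
  have heig : lapEig G = (lapMatrix_isHermitian G).eigenvalues := lapEig_spec G _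
  have hEdge : numEdges G = G.edgeFinset.card := numEdges_spec G
  have hsup : ∀ k : ℕ, k ≤ Fintype.card V → ∀ Cb : ℝ,
      (∀ T : Finset V, T.card = k → ∑ i ∈ T, lapEig G i ≤ Cb) → sLap G k ≤ Cb := by
    intro k hkn Cb hT
    obtain ⟨T0, -, hT0⟩ := Finset.exists_subset_card_eq
      (show k ≤ (Finset.univ : Finset V).card by rw [Finset.card_univ]; exact hkn)
    unfold sLap sumKLargest
    have hne : { x : ℝ | ∃ T : Finset V, T.card = k ∧ ∑ i ∈ T, lapEig G i = x }.Nonempty :=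
      ⟨∑ i ∈ T0, lapEig G i, T0, hT0, rfl⟩
    refine csSup_le hne ?_
    rintro y ⟨T, hTc, rfl⟩
    exact hT T hTc
  have hbound1 : ∀ T : Finset V, ∑ i ∈ T, lapEig G i ≤
      (numEdges G : ℝ) + (T.card : ℝ)^2/4 + Real.sqrt (2 * T.card * numEdges G) := by
    intro T
    rw [heig, hEdge]
    exact key_bound G hbip T
  have hbound2 : ∀ T : Finset V, ∑ i ∈ T, lapEig G i ≤ (T.card : ℝ) * Fintype.card V := by
    intro T
    rw [heig]
    calc ∑ i ∈ T, (lapMatrix_isHermitian G).eigenvalues i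
        ≤ ∑ _i ∈ T, (Fintype.card V : ℝ) := Finset.sum_le_sum fun i _ => eig_le_card G i
      _ = (T.card : ℝ) * Fintype.card V := by rw [Finset.sum_const, nsmul_eq_mul]
  have hchoose : ∀ k : ℕ, (k:ℝ)^2/2 ≤ (((k+1).choose 2 : ℕ) : ℝ) := by
    intro k
    rw [choose_two_cast k]
    have : (0:ℝ) ≤ (k:ℝ) := Nat.cast_nonneg _
    nlinarith
  have main1 : ∀ k : ℕ, 1 ≤ k → k ≤ Fintype.card V →
      Real.sqrt (32 * Fintype.card V) ≤ (k : ℝ) → BC G k := by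
    intro k hk1 hkn hsqrt
    have hk1r : (1:ℝ) ≤ (k:ℝ) := by exact_mod_cast hk1
    have hm0 : (0:ℝ) ≤ (numEdges G : ℝ) := Nat.cast_nonneg _
    have hn32 : 32 * (Fintype.card V : ℝ) ≤ (k:ℝ)^2 := by
      calc 32 * (Fintype.card V : ℝ)
          = Real.sqrt (32 * Fintype.card V) ^ 2 := (Real.sq_sqrt (by positivity)).symm
        _ ≤ (k:ℝ)^2 := by
            have := Real.sqrt_nonneg (32 * (Fintype.card V : ℝ))
            nlinarith
    unfold BC
    by_cases hcase : (numEdges G : ℝ) ≤ (k:ℝ)^3/32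
    · apply hsup k hkn
      intro T hTc
      have h1 := hbound1 T
      rw [hTc] at h1
      have hsq : Real.sqrt (2 * k * numEdges G) ≤ (k:ℝ)^2/4 := by
        have harg : (2*(k:ℝ)*(numEdges G : ℝ)) ≤ ((k:ℝ)^2/4)^2 := by nlinarith
        calc Real.sqrt (2 * k * numEdges G) ≤ Real.sqrt (((k:ℝ)^2/4)^2) :=
              Real.sqrt_le_sqrt harg
          _ = (k:ℝ)^2/4 := Real.sqrt_sq (by positivity)
      have := hchoose k
      linarith
    · push_neg at hcase
      apply hsup k hkn
      intro T hTc
      have h2 := hbound2 T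
      rw [hTc] at h2
      have hknm : (k:ℝ) * Fintype.card V ≤ (numEdges G : ℝ) := by nlinarith
      have hch0 : (0:ℝ) ≤ (((k+1).choose 2 : ℕ) : ℝ) := Nat.cast_nonneg _
      linarith
  refine ⟨main1, ?_⟩
  intro hm k hk1 hkn
  by_cases hcase : Real.sqrt (32 * Fintype.card V) ≤ (k:ℝ)
  · exact main1 k hk1 hkn hcase
  · push_neg at hcase
    have hn1 : (1:ℝ) ≤ (Fintype.card V : ℝ) := by exact_mod_cast le_trans hk1 hkn
    have h1 : (k:ℝ) * Fintype.card V < Real.sqrt (32 * Fintype.card V) * Fintype.card V :=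
      mul_lt_mul_of_pos_right hcase (by linarith)
    have h2 : Real.sqrt (32 * (Fintype.card V : ℝ)) * Fintype.card V
        = Real.sqrt 32 * (Fintype.card V : ℝ) ^ ((3:ℝ)/2) := by
      rw [Real.sqrt_mul (by norm_num), mul_assoc]
      congr 1
      rw [Real.sqrt_eq_rpow, show ((3:ℝ)/2) = 1/2 + 1 by norm_num,
        Real.rpow_add (by linarith), Real.rpow_one]
    have hknm : (k:ℝ) * Fintype.card V ≤ (numEdges G : ℝ) := by
      rw [h2] at h1
      linarith
    unfold BC
    apply hsup k hkn
    intro T hTc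
    have hb := hbound2 T
    rw [hTc] at hb
    have hch0 : (0:ℝ) ≤ (((k+1).choose 2 : ℕ) : ℝ) := Nat.cast_nonneg _
    linarith


end Brouwer
end

section
/- Let G be a simple graph on n vertices with m edges, let D = Σ_v deg(v)² be the sum of the squared degrees, and let 1 ≤ k ≤ n−1. Setting α = k/n, β = 2m/n², and τ = D/n³, one has s_k(G)/n² ≤ αβ + √(α(1−α)) · √(τ − β² + β/n). -/
open Finset

namespace Brouwer

variable {V : Type*}

section Aux
open Matrix
variable {V : Type*} [Fintype V] [DecidableEq V]

lemma sum_eigenvalues_eq_trace {A : Matrix V V ℝ} (hA : A.IsHermitian) :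
    ∑ i, hA.eigenvalues i = A.trace := by
  have h1 : (star (hA.eigenvectorUnitary : Matrix V V ℝ)) * (hA.eigenvectorUnitary : Matrix V V ℝ) = 1 :=
    Unitary.coe_star_mul_self hA.eigenvectorUnitary
  conv_rhs => rw [hA.spectral_theorem, Unitary.conjStarAlgAut_apply]
  rw [Matrix.trace_mul_comm, ← Matrix.mul_assoc, h1, Matrix.one_mul,
    Matrix.trace_diagonal]
  simp

lemma sum_sq_eigenvalues_eq_trace {A : Matrix V V ℝ} (hA : A.IsHermitian) :
    ∑ i, (hA.eigenvalues i) ^ 2 = (A * A).trace := by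
  set U : Matrix V V ℝ := (hA.eigenvectorUnitary : Matrix V V ℝ)
  set D : Matrix V V ℝ := Matrix.diagonal (RCLike.ofReal ∘ hA.eigenvalues)
  have h1 : star U * U = 1 := Unitary.coe_star_mul_self hA.eigenvectorUnitary
  have key : A * A = U * (D * D) * star U := by
    conv_lhs => rw [hA.spectral_theorem, Unitary.conjStarAlgAut_apply]
    simp only [Matrix.mul_assoc]
    rw [← Matrix.mul_assoc (star U) U, h1, Matrix.one_mul]
  rw [key, Matrix.trace_mul_comm, ← Matrix.mul_assoc, h1, Matrix.one_mul]
  rw [show D * D = Matrix.diagonal (fun i => hA.eigenvalues i ^ 2) from ?_, Matrix.trace_diagonal]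
  · rw [Matrix.diagonal_mul_diagonal]
    funext i
    simp [sq]

section Graph
variable (G : SimpleGraph V) [DecidableRel G.Adj]

lemma trace_lapMatrix : (G.lapMatrix ℝ).trace = ∑ v, (G.degree v : ℝ) := by
  simp [Matrix.trace, Matrix.diag, SimpleGraph.lapMatrix, SimpleGraph.degMatrix]

lemma lap_entry (i j : V) :
    G.lapMatrix ℝ i j = (if i = j then (G.degree i : ℝ) else 0) - (if G.Adj i j then 1 else 0) := by
  simp [SimpleGraph.lapMatrix, SimpleGraph.degMatrix, Matrix.diagonal]

lemma trace_lapMatrix_sq :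
    (G.lapMatrix ℝ * G.lapMatrix ℝ).trace = ∑ v, (G.degree v : ℝ) ^ 2 + ∑ v, (G.degree v : ℝ) := by
  have key : ∀ i j : V, G.lapMatrix ℝ i j * G.lapMatrix ℝ j i
      = (if i = j then (G.degree i : ℝ) ^ 2 else 0) + (if G.Adj i j then 1 else 0) := by
    intro i j
    rw [lap_entry, lap_entry]
    by_cases h : i = j
    · subst h; simp [sq]
    · by_cases ha : G.Adj i j
      · simp [h, Ne.symm h, ha, ha.symm]
      · simp [h, Ne.symm h, ha, fun hh : G.Adj j i => ha hh.symm]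
  have deg_row : ∀ i : V, ∑ j, (if G.Adj i j then (1:ℝ) else 0) = (G.degree i : ℝ) := by
    intro i
    rw [Finset.sum_boole]
    congr 1
    rw [SimpleGraph.degree, SimpleGraph.neighborFinset_eq_filter]
  simp only [Matrix.trace, Matrix.diag, Matrix.mul_apply]
  calc ∑ i, ∑ j, G.lapMatrix ℝ i j * G.lapMatrix ℝ j i
      = ∑ i : V, ((G.degree i : ℝ) ^ 2 + (G.degree i : ℝ)) := by
        refine Finset.sum_congr rfl fun i _ => ?_
        rw [Finset.sum_congr rfl fun j _ => key i j, Finset.sum_add_distrib,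
          Finset.sum_ite_eq univ i (fun _ => (G.degree i : ℝ)^2), deg_row]
        simp
    _ = _ := by rw [Finset.sum_add_distrib]

end Graph

lemma sum_subset_le (f : V → ℝ) (T : Finset V) (hV : 0 < Fintype.card V) :
    ∑ i ∈ T, f i ≤ (T.card : ℝ) * (∑ i, f i) / (Fintype.card V : ℝ)
      + Real.sqrt ((T.card : ℝ) * ((Fintype.card V : ℝ) - (T.card : ℝ)) / (Fintype.card V : ℝ))
        * Real.sqrt ((∑ i, (f i) ^ 2) - (∑ i, f i) ^ 2 / (Fintype.card V : ℝ)) := by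
  set n : ℝ := (Fintype.card V : ℝ) with hn
  set k : ℝ := (T.card : ℝ) with hk
  set S : ℝ := ∑ i, f i with hS
  set Q : ℝ := ∑ i, (f i) ^ 2 with hQ
  have hn0 : (0:ℝ) < n := by rw [hn]; exact_mod_cast hV
  have hn0' : n ≠ 0 := ne_of_gt hn0
  set g : V → ℝ := fun i => (if i ∈ T then 1 else 0) - k / n with hg
  set h : V → ℝ := fun i => f i - S / n with hh
  have hsum_ind : ∑ i : V, (if i ∈ T then (1:ℝ) else 0) = k := by
    rw [Finset.sum_boole]; simp [hk]
  have hsum_find : ∑ i : V, f i * (if i ∈ T then (1:ℝ) else 0) = ∑ i ∈ T, f i := by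
    simp [mul_ite, Finset.sum_ite_mem]
  have e1 : ∑ i, h i * g i = ∑ i ∈ T, f i - k * S / n := by
    have expand : ∀ i, h i * g i = f i * (if i ∈ T then (1:ℝ) else 0)
        - (k/n) * f i - (S/n) * (if i ∈ T then (1:ℝ) else 0) + (S/n) * (k/n) := by
      intro i; by_cases hi : i ∈ T <;> simp [hh, hg, hi] <;> ring
    rw [Finset.sum_congr rfl fun i _ => expand i]
    simp only [Finset.sum_add_distrib, Finset.sum_sub_distrib, hsum_find, ← Finset.mul_sum,
      hsum_ind, Finset.sum_const, Finset.card_univ, nsmul_eq_mul, ← hS, ← hn]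
    field_simp
    ring
  have e2 : ∑ i, g i ^ 2 = k * (n - k) / n := by
    have expand : ∀ i, g i ^ 2 = (if i ∈ T then (1:ℝ) else 0)
        - 2 * (k/n) * (if i ∈ T then (1:ℝ) else 0) + (k/n) ^ 2 := by
      intro i; by_cases hi : i ∈ T <;> simp [hg, hi] <;> ring
    rw [Finset.sum_congr rfl fun i _ => expand i]
    simp only [Finset.sum_add_distrib, Finset.sum_sub_distrib, ← Finset.mul_sum, hsum_ind,
      Finset.sum_const, Finset.card_univ, nsmul_eq_mul, ← hn]
    field_simp
    ring
  have e3 : ∑ i, h i ^ 2 = Q - S ^ 2 / n := by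
    have expand : ∀ i, h i ^ 2 = f i ^ 2 - 2 * (S/n) * f i + (S/n) ^ 2 := by
      intro i; simp only [hh]; ring
    rw [Finset.sum_congr rfl fun i _ => expand i]
    simp only [Finset.sum_add_distrib, Finset.sum_sub_distrib, ← Finset.mul_sum, ← hS, ← hQ,
      Finset.sum_const, Finset.card_univ, nsmul_eq_mul, ← hn]
    field_simp
    ring
  have cs : (∑ i, h i * g i) ^ 2 ≤ (∑ i, h i ^ 2) * ∑ i, g i ^ 2 :=
    Finset.sum_mul_sq_le_sq_mul_sq univ h g
  have key : ∑ i ∈ T, f i - k * S / n ≤ Real.sqrt (Q - S ^ 2 / n) * Real.sqrt (k * (n - k) / n) := by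
    rw [← e1, ← e2, ← e3, ← Real.sqrt_mul (by positivity : (0:ℝ) ≤ ∑ i, h i ^ 2)]
    calc ∑ i, h i * g i ≤ |∑ i, h i * g i| := le_abs_self _
      _ = Real.sqrt ((∑ i, h i * g i) ^ 2) := (Real.sqrt_sq_eq_abs _).symm
      _ ≤ _ := Real.sqrt_le_sqrt cs
  have := sub_le_iff_le_add.mp key
  calc ∑ i ∈ T, f i ≤ Real.sqrt (Q - S ^ 2 / n) * Real.sqrt (k * (n - k) / n) + k * S / n := this
    _ = k * S / n + Real.sqrt (k * (n - k) / n) * Real.sqrt (Q - S ^ 2 / n) := by ring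

end Aux

/-- with `α = k/n`, `β = 2m/n²`, `τ = (Σ_v deg(v)²)/n³`, one has
`s_k(G)/n² ≤ αβ + √(α(1-α)) · √(τ - β² + β/n)`. -/
theorem sLap_variance_bound {V : Type*} [Fintype V] [DecidableEq V] (G : SimpleGraph V)
    [DecidableRel G.Adj] (k : ℕ) (hk1 : 1 ≤ k) (hk2 : k ≤ Fintype.card V - 1)
    (n α β τ : ℝ) (hn : n = (Fintype.card V : ℝ)) (hα : α = (k : ℝ) / n)
    (hβ : β = 2 * (numEdges G : ℝ) / n ^ 2)
    (hτ : τ = (∑ v : V, (G.degree v : ℝ) ^ 2) / n ^ 3) :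
    sLap G k / n ^ 2 ≤ α * β + Real.sqrt (α * (1 - α)) * Real.sqrt (τ - β ^ 2 + β / n) := by
  have hcard : 0 < Fintype.card V := by omega
  have hn0 : (0:ℝ) < n := by rw [hn]; exact_mod_cast hcard
  have hn0' : n ≠ 0 := ne_of_gt hn0
  have hkn : (k:ℝ) ≤ n := by rw [hn]; exact_mod_cast le_trans hk2 (Nat.sub_le _ _)
  have hk0 : (0:ℝ) ≤ (k:ℝ) := Nat.cast_nonneg k
  have hL : lapEig G = (lapMatrix_isHermitian G).eigenvalues := by
    unfold lapEig; congr!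
  have hE : (numEdges G : ℝ) = (G.edgeFinset.card : ℝ) := by
    unfold numEdges; congr!
  have hS : ∑ v, lapEig G v = 2 * (numEdges G : ℝ) := by
    rw [hL, sum_eigenvalues_eq_trace, trace_lapMatrix, hE]
    exact_mod_cast G.sum_degrees_eq_twice_card_edges
  have hQ : ∑ v, (lapEig G v) ^ 2
      = (∑ v : V, (G.degree v : ℝ) ^ 2) + 2 * (numEdges G : ℝ) := by
    rw [hL, sum_sq_eigenvalues_eq_trace, trace_lapMatrix_sq, hE]
    congr 1
    exact_mod_cast G.sum_degrees_eq_twice_card_edges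
  have hvar : 0 ≤ (∑ v : V, (G.degree v : ℝ) ^ 2) + 2 * (numEdges G : ℝ)
      - (2 * (numEdges G : ℝ)) ^ 2 / n := by
    have h := sq_sum_le_card_mul_sum_sq (s := (univ : Finset V)) (f := lapEig G)
    rw [hS, hQ, Finset.card_univ] at h
    have h' : (2 * (numEdges G : ℝ)) ^ 2
        ≤ n * ((∑ v : V, (G.degree v : ℝ) ^ 2) + 2 * (numEdges G : ℝ)) := by
      calc (2 * (numEdges G : ℝ)) ^ 2
          ≤ ((Fintype.card V : ℕ) : ℝ)
            * ((∑ v : V, (G.degree v : ℝ) ^ 2) + 2 * (numEdges G : ℝ)) := by exact_mod_cast h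
        _ = _ := by rw [hn]
    rw [sub_nonneg, div_le_iff₀ hn0]
    linarith [h']
  have hXeq : τ - β ^ 2 + β / n
      = ((∑ v : V, (G.degree v : ℝ) ^ 2) + 2 * (numEdges G : ℝ)
        - (2 * (numEdges G : ℝ)) ^ 2 / n) / n ^ 3 := by
    rw [hτ, hβ]
    field_simp
    ring
  have hX : 0 ≤ τ - β ^ 2 + β / n := by rw [hXeq]; positivity
  have hα0 : 0 ≤ α := by rw [hα]; positivity
  have hα1 : α ≤ 1 := by rw [hα]; exact (div_le_one hn0).2 hkn
  have hβ0 : 0 ≤ β := by rw [hβ]; positivity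
  rw [div_le_iff₀ (by positivity : (0:ℝ) < n ^ 2)]
  unfold sLap sumKLargest
  apply Real.sSup_le
  · rintro x ⟨T, hTc, rfl⟩
    refine le_trans (sum_subset_le (lapEig G) T hcard) (le_of_eq ?_)
    rw [hTc, hS, hQ, ← hn, add_mul]
    congr 1
    · rw [hα, hβ]; field_simp
    · have h1 : (0:ℝ) ≤ (k:ℝ) * (n - (k:ℝ)) / n :=
        div_nonneg (mul_nonneg hk0 (by linarith)) hn0.le
      have h2 : (0:ℝ) ≤ α * (1 - α) := mul_nonneg hα0 (by linarith)
      rw [← Real.sqrt_mul h1, ← Real.sqrt_mul h2,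
        show Real.sqrt (α * (1 - α) * (τ - β ^ 2 + β / n)) * n ^ 2
          = Real.sqrt (α * (1 - α) * (τ - β ^ 2 + β / n)) * Real.sqrt ((n ^ 2) ^ 2) by
            rw [Real.sqrt_sq (by positivity : (0:ℝ) ≤ n ^ 2)],
        ← Real.sqrt_mul (mul_nonneg h2 hX)]
      congr 1
      rw [hXeq, hα]
      field_simp
  · have h0 : (0:ℝ) ≤ α * β + Real.sqrt (α * (1 - α)) * Real.sqrt (τ - β ^ 2 + β / n) := by
      have s1 := Real.sqrt_nonneg (α * (1 - α))
      have s2 := Real.sqrt_nonneg (τ - β ^ 2 + β / n)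
      nlinarith [mul_nonneg hα0 hβ0]
    positivity

end Brouwer
end
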